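/- Let U ⊆ ℝⁿ be a nonempty connected open set and Φ : ℝⁿ → ℝ be twice continuously differentiable on U. Then Hess Φ(x)(x, v) = 0 for all x ∈ U and all v ∈ ℝⁿ if and only if there exists a constant c ∈ ℝ such that DΦ(x)(x) = Φ(x) + c for all x ∈ U (i.e., the potential Φ is extensive up to an additive constant). -/

import Mathlib

private lemma radiant_aux_hasFDerivAt
    {n : ℕ} {U : Set (EuclideanSpace ℝ (Fin n))} (hU : IsOpen U)
    {Φ : EuclideanSpace ℝ (Fin n) → ℝ} (hΦ : ContDiffOn ℝ 2 Φ U)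
    {x : EuclideanSpace ℝ (Fin n)} (hx : x ∈ U) :
    HasFDerivAt (fun y => fderiv ℝ Φ y y - Φ y)
      ((fderiv ℝ (fderiv ℝ Φ) x).flip x) x := by
  have hxat : ContDiffAt ℝ 2 Φ x := hΦ.contDiffAt (hU.mem_nhds hx)
  have h1 : ContDiffAt ℝ 1 (fderiv ℝ Φ) x := hxat.fderiv_right (by norm_num)
  have hd1 : DifferentiableAt ℝ (fderiv ℝ Φ) x := h1.differentiableAt one_ne_zero
  have hdΦ : DifferentiableAt ℝ Φ x := hxat.differentiableAt (by norm_num)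
  have h2 : HasFDerivAt (fun y => (fderiv ℝ Φ y) y)
      ((fderiv ℝ Φ x).comp (ContinuousLinearMap.id ℝ _) +
        (fderiv ℝ (fderiv ℝ Φ) x).flip x) x :=
    hd1.hasFDerivAt.clm_apply (hasFDerivAt_id x)
  have h3 := h2.sub hdΦ.hasFDerivAt
  refine h3.congr_fderiv ?_
  ext v
  simp

theorem radiant_flat_zero_iff_potential_extensive
    (n : ℕ) (U : Set (EuclideanSpace ℝ (Fin n))) (hU : IsOpen U)
    (hne : U.Nonempty) (hconn : IsPreconnected U)
    (Φ : EuclideanSpace ℝ (Fin n) → ℝ) (hΦ : ContDiffOn ℝ 2 Φ U) :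
    (∀ x ∈ U, ∀ v, fderiv ℝ (fderiv ℝ Φ) x x v = 0) ↔
      (∃ c : ℝ, ∀ x ∈ U, fderiv ℝ Φ x x = Φ x + c) := by
  set g : EuclideanSpace ℝ (Fin n) → ℝ := fun y => fderiv ℝ Φ y y - Φ y with hg
  have hsymm : ∀ x ∈ U, IsSymmSndFDerivAt ℝ Φ x := fun x hx =>
    (hΦ.contDiffAt (hU.mem_nhds hx)).isSymmSndFDerivAt (by simp)
  constructor
  · intro h0
    -- derivative of g vanishes on U
    have hgz : ∀ x ∈ U, HasFDerivAt g (0 : EuclideanSpace ℝ (Fin n) →L[ℝ] ℝ) x := by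
      intro x hx
      have := radiant_aux_hasFDerivAt hU hΦ hx
      refine this.congr_fderiv ?_
      ext v
      have := (hsymm x hx).eq v x
      simp only [ContinuousLinearMap.flip_apply, ContinuousLinearMap.zero_apply]
      rw [this, h0 x hx v]
    -- g is locally constant on U, hence constant
    haveI : PreconnectedSpace U := Subtype.preconnectedSpace hconn
    have hlc : IsLocallyConstant (fun y : U => g y.1) := by
      rw [IsLocallyConstant.iff_exists_open]
      rintro ⟨x, hx⟩
      obtain ⟨ε, hε, hball⟩ := Metric.isOpen_iff.1 hU x hx
      refine ⟨Subtype.val ⁻¹' Metric.ball x ε,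
        (Metric.isOpen_ball).preimage continuous_subtype_val,
        Set.mem_preimage.2 (Metric.mem_ball_self hε), ?_⟩
      rintro ⟨y, hy⟩ hyb
      have hconv : Convex ℝ (Metric.ball x ε) := convex_ball x ε
      have hdiff : DifferentiableOn ℝ g (Metric.ball x ε) := fun z hz =>
        ((hgz z (hball hz)).differentiableAt).differentiableWithinAt
      have hzero : ∀ z ∈ Metric.ball x ε, fderivWithin ℝ g (Metric.ball x ε) z = 0 :=
        fun z hz => ((hgz z (hball hz)).hasFDerivWithinAt.fderivWithin
          (Metric.isOpen_ball.uniqueDiffWithinAt hz))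
      exact hconv.is_const_of_fderivWithin_eq_zero hdiff hzero hyb
        (Metric.mem_ball_self hε)
    obtain ⟨x₀, hx₀⟩ := hne
    refine ⟨g x₀, fun x hx => ?_⟩
    have := hlc.apply_eq_of_preconnectedSpace ⟨x, hx⟩ ⟨x₀, hx₀⟩
    simpa [hg, sub_eq_iff_eq_add'] using this
  · rintro ⟨c, hc⟩ x hx v
    -- g is eventually constant near x, so its derivative is 0
    have hev : g =ᶠ[nhds x] fun _ => c := by
      filter_upwards [hU.mem_nhds hx] with y hy
      simp [hg, hc y hy]
    have h0 : HasFDerivAt g (0 : EuclideanSpace ℝ (Fin n) →L[ℝ] ℝ) x :=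
      (hasFDerivAt_const c x).congr_of_eventuallyEq hev
    have h1 := radiant_aux_hasFDerivAt hU hΦ hx
    have heq := h1.unique h0
    have := (hsymm x hx).eq x v
    rw [this]
    have := congrArg (fun L => L v) heq
    simpa using this
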